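/- Let d ≥ 1, X = [0,1]^d, B > 0, n ≥ 1, and let f : X → ℝ, f(x) = −(B/d)·(x_1 + ⋯ + x_d). Let X_1, …, X_n be i.i.d. uniform on X and let P̃_f be the law of the Monte Carlo sample X_I, i.e., the probability measure defined by P̃_f(A) := E[ Σ_{i=1}^n (exp(f(X_i)) / Σ_{j=1}^n exp(f(X_j))) · 1_A(X_i) ] for measurable A ⊆ X. If B·n^{−1/d} ≥ 4d·log(4d), then D_TV(P_f, P̃_f) ≥ 1/2. -/

import Mathlib

open MeasureTheory Real

noncomputable section

/-- The unit cube `[0,1]^d` in `ℝ^d`. -/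
def cube (d : ℕ) : Set (Fin d → ℝ) := Set.Icc 0 1

/-- The partition function `Z_f = ∫_X exp(f(x)) dx`. -/
def partZ {d : ℕ} (f : (Fin d → ℝ) → ℝ) : ℝ := ∫ x in cube d, Real.exp (f x)

/-- The log-partition function `L_f = log Z_f`. -/
def logPart {d : ℕ} (f : (Fin d → ℝ) → ℝ) : ℝ := Real.log (partZ f)

/-- The Gibbs measure `P_f` with density `exp(f(x))/Z_f` w.r.t. Lebesgue measure on the cube. -/
def gibbs {d : ℕ} (f : (Fin d → ℝ) → ℝ) : Measure (Fin d → ℝ) :=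
  (volume.restrict (cube d)).withDensity fun x => ENNReal.ofReal (Real.exp (f x) / partZ f)

/-- Essential supremum norm `‖h‖_∞` over the cube. -/
def supNormOn {d : ℕ} (h : (Fin d → ℝ) → ℝ) : ℝ :=
  essSup (fun x => |h x|) (volume.restrict (cube d))

/-- Total variation distance between two measures: `sup_A |P(A) − Q(A)|`. -/
def DTV {α : Type*} [MeasurableSpace α] (P Q : Measure α) : ℝ :=
  ⨆ A : {A : Set α // MeasurableSet A}, |(P A.1).toReal - (Q A.1).toReal|

/-- `f` is bounded on the cube. -/
def BddOnCube {d : ℕ} (f : (Fin d → ℝ) → ℝ) : Prop := ∃ C, ∀ x ∈ cube d, |f x| ≤ C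

lemma int1d (c t : ℝ) (hc : 0 < c) (ht : 0 ≤ t) :
    ∫ u in Set.Icc (0:ℝ) t, Real.exp (-c * u) = (1 - Real.exp (-c * t)) / c := by
  rw [integral_Icc_eq_integral_Ioc, ← intervalIntegral.integral_of_le ht]
  have hder : ∀ u ∈ Set.uIcc (0:ℝ) t,
      HasDerivAt (fun u => -(Real.exp (-c * u)) / c) (Real.exp (-c * u)) u := by
    intro u _
    have h1 : HasDerivAt (fun u : ℝ => -c * u) (-c) u := by
      simpa using (hasDerivAt_id u).const_mul (-c)
    have h2 : HasDerivAt (fun u => Real.exp (-c * u)) (Real.exp (-c * u) * (-c)) u :=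
      (Real.hasDerivAt_exp (-c * u)).comp u h1
    have h3 := (h2.neg).div_const c
    convert h3 using 1
    · rfl
    · rfl
    · rfl
    · rw [eq_div_iff hc.ne']; ring
  rw [intervalIntegral.integral_eq_sub_of_hasDerivAt hder
    (((Real.continuous_exp.comp (continuous_const.mul continuous_id)).intervalIntegrable 0 t))]
  rw [mul_zero, Real.exp_zero]; ring

lemma intbox (d : ℕ) (c t : ℝ) (hc : 0 < c) (ht : 0 ≤ t) :
    ∫ x in Set.Icc (0 : Fin d → ℝ) (fun _ => t), Real.exp (-c * ∑ i, x i)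
      = ((1 - Real.exp (-c * t)) / c) ^ d := by
  have hms : MeasurableSet (Set.Icc (0 : Fin d → ℝ) fun _ => t) := measurableSet_Icc
  rw [← integral_indicator hms]
  have heq : (Set.Icc (0 : Fin d → ℝ) fun _ => t).indicator
        (fun x => Real.exp (-c * ∑ i, x i))
      = fun x => ∏ i, (Set.Icc (0:ℝ) t).indicator (fun u => Real.exp (-c*u)) (x i) := by
    funext x
    by_cases hx : x ∈ Set.Icc (0 : Fin d → ℝ) fun _ => t
    · rw [Set.indicator_of_mem hx]
      have hxi : ∀ i, x i ∈ Set.Icc (0:ℝ) t := fun i => ⟨hx.1 i, hx.2 i⟩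
      rw [Finset.mul_sum, Real.exp_sum]
      exact Finset.prod_congr rfl fun i _ =>
        (Set.indicator_of_mem (hxi i) (fun u => Real.exp (-c*u))).symm
    · rw [Set.indicator_of_notMem hx]
      obtain ⟨i, hi⟩ : ∃ i, x i ∉ Set.Icc (0:ℝ) t := by
        by_contra h; push_neg at h
        exact hx ⟨fun i => (h i).1, fun i => (h i).2⟩
      exact (Finset.prod_eq_zero (Finset.mem_univ i) (Set.indicator_of_notMem hi _)).symm
  rw [heq]
  beta_reduce
  rw [volume_pi, MeasureTheory.integral_fintype_prod_eq_pow (ι := Fin d)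
    ((Set.Icc (0:ℝ) t).indicator (fun u => Real.exp (-c*u))), Fintype.card_fin,
    integral_indicator measurableSet_Icc, int1d c t hc ht]

lemma div_pow_div (x y c : ℝ) (hc : c ≠ 0) (hy : y ≠ 0) (d : ℕ) :
    ((x/c)^d)/((y/c)^d) = (x/y)^d := by
  rw [div_pow, div_pow, div_pow]
  rw [div_div_div_cancel_right₀]
  exact pow_ne_zero _ hc

lemma gibbs_apply' {d : ℕ} (f : (Fin d → ℝ) → ℝ) (hfc : Continuous f)
    (hZ : 0 < partZ f) {A : Set (Fin d → ℝ)} (hA : MeasurableSet A)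
    (hsub : A ⊆ cube d) (hAcomp : IsCompact A) :
    gibbs f A = ENNReal.ofReal ((∫ x in A, Real.exp (f x)) / partZ f) := by
  unfold gibbs
  rw [withDensity_apply _ hA, Measure.restrict_restrict hA,
    Set.inter_eq_self_of_subset_left hsub]
  have hint : IntegrableOn (fun x => Real.exp (f x) / partZ f) A volume :=
    (((Real.continuous_exp.comp hfc).div_const _).continuousOn).integrableOn_compact hAcomp
  rw [← ofReal_integral_eq_lintegral_ofReal hint
    (Filter.Eventually.of_forall fun x => div_nonneg (Real.exp_pos _).le hZ.le),
    integral_div]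

lemma cube_prob (d : ℕ) : IsProbabilityMeasure (volume.restrict (cube d)) := by
  constructor
  rw [Measure.restrict_apply_univ, cube, Real.volume_Icc_pi]
  simp

lemma eval_preimage_pi {d n : ℕ} (i : Fin n) (A : Set (Fin d → ℝ)) :
    (Measure.pi fun _ : Fin n => volume.restrict (cube d))
      ((fun ω : Fin n → (Fin d → ℝ) => ω i) ⁻¹' A) = volume.restrict (cube d) A := by
  haveI := cube_prob d
  have hset : (fun ω : Fin n → (Fin d → ℝ) => ω i) ⁻¹' A
      = Set.pi Set.univ (fun j => if j = i then A else Set.univ) := by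
    ext ω
    simp only [Set.mem_preimage, Set.mem_pi, Set.mem_univ, true_implies]
    constructor
    · intro h j
      by_cases hj : j = i
      · subst hj; simpa using h
      · simp [hj]
    · intro h; simpa using h i
  rw [hset, Measure.pi_pi]
  have : ∀ j : Fin n, (volume.restrict (cube d)) (if j = i then A else Set.univ)
      = if j = i then (volume.restrict (cube d)) A else 1 := by
    intro j; by_cases hj : j = i <;> simp [hj]
  simp_rw [this]
  simp [Finset.prod_ite_eq]

set_option maxHeartbeats 1000000

theorem mc_sampling_lower_bound (d n : ℕ) (hd : 1 ≤ d) (hn : 1 ≤ n) (B : ℝ) (hB : 0 < B)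
    (f : (Fin d → ℝ) → ℝ) (hf : ∀ x, f x = -(B / d) * ∑ i, x i)
    (Pt : Set (Fin d → ℝ) → ℝ)
    (hPt : ∀ A : Set (Fin d → ℝ), Pt A =
      ∫ ω : Fin n → (Fin d → ℝ),
        (∑ i, Real.exp (f (ω i)) / (∑ j, Real.exp (f (ω j))) * A.indicator 1 (ω i))
        ∂(Measure.pi fun _ => volume.restrict (cube d)))
    (hcond : 4 * d * Real.log (4 * d) ≤ B * (n : ℝ) ^ (-(1 : ℝ) / d)) :
    (1 : ℝ) / 2 ≤
      ⨆ A : {A : Set (Fin d → ℝ) // MeasurableSet A}, |(gibbs f A.1).toReal - Pt A.1| := by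
  haveI := cube_prob d
  haveI : Nonempty (Fin n) := ⟨⟨0, hn⟩⟩
  have hd' : (0:ℝ) < d := by exact_mod_cast hd
  have hn' : (0:ℝ) < n := by exact_mod_cast hn
  have hn1 : (1:ℝ) ≤ n := by exact_mod_cast hn
  have hd1 : (1:ℝ) ≤ d := by exact_mod_cast hd
  set c : ℝ := B / d with hc_def
  clear_value c
  have hc : 0 < c := by rw [hc_def]; exact div_pos hB hd'
  have hfc : Continuous f := by
    have : f = fun x => -c * ∑ i, x i := funext hf
    rw [this]
    exact continuous_const.mul (continuous_finset_sum _ fun i _ => continuous_apply i)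
  -- the sample measure
  set μn : Measure (Fin n → (Fin d → ℝ)) := Measure.pi fun _ => volume.restrict (cube d) with hpi
  clear_value μn
  haveI : IsProbabilityMeasure μn := by rw [hpi]; infer_instance
  have hsum : ∀ ω : Fin n → (Fin d → ℝ), 0 < ∑ j, Real.exp (f (ω j)) := fun ω =>
    Finset.sum_pos (fun j _ => Real.exp_pos _) Finset.univ_nonempty
  have hind01 : ∀ (A : Set (Fin d → ℝ)) (y : Fin d → ℝ),
      0 ≤ A.indicator (1 : (Fin d → ℝ) → ℝ) y ∧ A.indicator (1 : (Fin d → ℝ) → ℝ) y ≤ 1 := by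
    intro A y
    by_cases h : y ∈ A <;> simp [Set.indicator_apply, h]
  have hPt0 : ∀ A : Set (Fin d → ℝ), 0 ≤ Pt A := by
    intro A
    rw [hPt A]
    exact integral_nonneg fun ω => Finset.sum_nonneg fun i _ =>
      mul_nonneg (div_nonneg (Real.exp_pos _).le (hsum ω).le) (hind01 A (ω i)).1
  have hPtle1 : ∀ A : Set (Fin d → ℝ), Pt A ≤ 1 := by
    intro A
    rw [hPt A]
    have hle : ∀ ω : Fin n → (Fin d → ℝ),
        (∑ i, Real.exp (f (ω i)) / (∑ j, Real.exp (f (ω j))) * A.indicator 1 (ω i)) ≤ 1 := by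
      intro ω
      calc ∑ i, Real.exp (f (ω i)) / (∑ j, Real.exp (f (ω j))) * A.indicator 1 (ω i)
          ≤ ∑ i, Real.exp (f (ω i)) / (∑ j, Real.exp (f (ω j))) :=
            Finset.sum_le_sum fun i _ => mul_le_of_le_one_right
              (div_nonneg (Real.exp_pos _).le (hsum ω).le) (hind01 A (ω i)).2
        _ = 1 := by rw [← Finset.sum_div, div_self (hsum ω).ne']
    calc (∫ ω, (∑ i, Real.exp (f (ω i)) / (∑ j, Real.exp (f (ω j))) * A.indicator 1 (ω i)) ∂μn)
        ≤ ∫ _ω, (1:ℝ) ∂μn := by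
          refine integral_mono_of_nonneg ?_ (integrable_const 1)
            (Filter.Eventually.of_forall hle)
          exact Filter.Eventually.of_forall fun ω => Finset.sum_nonneg fun i _ =>
            mul_nonneg (div_nonneg (Real.exp_pos _).le (hsum ω).le) (hind01 A (ω i)).1
      _ = 1 := by simp
  -- partition function
  have hZval : partZ f = ((1 - Real.exp (-c * 1)) / c) ^ d := by
    unfold partZ
    have hcube : cube d = Set.Icc (0 : Fin d → ℝ) (fun _ => 1) := rfl
    rw [hcube]
    rw [show (fun x : Fin d → ℝ => Real.exp (f x))
      = fun x => Real.exp (-c * ∑ i, x i) from funext fun x => by rw [hf x]]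
    exact intbox d c 1 hc zero_le_one
  have hexpc : Real.exp (-c * 1) < 1 := by
    rw [Real.exp_lt_one_iff]; nlinarith
  have hZ : 0 < partZ f := by
    rw [hZval]
    exact pow_pos (div_pos (by linarith) hc) d
  -- the test set
  set t : ℝ := (4 * n : ℝ) ^ (-(1:ℝ)/d) with ht_def
  clear_value t
  have h4n : (0:ℝ) < 4 * n := by linarith
  have ht0 : 0 < t := by rw [ht_def]; exact Real.rpow_pos_of_pos h4n _
  have ht1 : t ≤ 1 := by
    rw [ht_def]
    exact Real.rpow_le_one_of_one_le_of_nonpos (by linarith)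
      (by rw [neg_div]; exact neg_nonpos.mpr (div_nonneg zero_le_one hd'.le))
  have htd : t ^ d = 1 / (4 * n) := by
    rw [ht_def, ← Real.rpow_natCast ((4 * n : ℝ) ^ (-(1:ℝ)/d)) d, ← Real.rpow_mul h4n.le]
    rw [show (-(1:ℝ)/d) * d = -1 by field_simp]
    rw [Real.rpow_neg_one]
    rw [one_div]
  set A : Set (Fin d → ℝ) := Set.Icc 0 (fun _ => t) with hA_def
  clear_value A
  have hA : MeasurableSet A := by rw [hA_def]; exact measurableSet_Icc
  have hsub : A ⊆ cube d := by rw [hA_def]; exact Set.Icc_subset_Icc le_rfl (fun i => ht1)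
  have hAcomp : IsCompact A := by rw [hA_def]; exact isCompact_Icc
  -- gibbs value on A
  have hectle1 : Real.exp (-c * t) ≤ 1 := Real.exp_le_one_iff.mpr (by nlinarith)
  have hintA : (∫ x in A, Real.exp (f x)) = ((1 - Real.exp (-c * t)) / c) ^ d := by
    rw [hA_def, show (fun x : Fin d → ℝ => Real.exp (f x))
      = fun x => Real.exp (-c * ∑ i, x i) from funext fun x => by rw [hf x]]
    exact intbox d c t hc ht0.le
  have hden0 : (0:ℝ) < 1 - Real.exp (-c * 1) := by linarith
  have hgibbsA : (gibbs f A).toReal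
      = ((1 - Real.exp (-c * t)) / (1 - Real.exp (-c * 1))) ^ d := by
    rw [gibbs_apply' f hfc hZ hA hsub hAcomp, hintA, hZval, ENNReal.toReal_ofReal
      (div_nonneg (pow_nonneg (div_nonneg (by linarith) hc.le) d)
        (pow_nonneg (div_nonneg hden0.le hc.le) d))]
    exact div_pow_div _ _ _ hc.ne' hden0.ne' d
  -- Pt on A is small
  have hpre : ∀ i : Fin n, MeasurableSet ((fun ω : Fin n → (Fin d → ℝ) => ω i) ⁻¹' A) :=
    fun i => hA.preimage (measurable_pi_apply i)
  have hPtA : Pt A ≤ (n:ℝ) * t ^ d := by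
    rw [hPt A]
    have hgi : Integrable (fun ω : Fin n → (Fin d → ℝ) =>
        ∑ i, ((fun ω' : Fin n → (Fin d → ℝ) => ω' i) ⁻¹' A).indicator
          (1 : (Fin n → (Fin d → ℝ)) → ℝ) ω) μn :=
      integrable_finset_sum _ fun i _ => (integrable_const (1:ℝ)).indicator (hpre i)
    have hmono : (∫ ω, (∑ i, Real.exp (f (ω i)) / (∑ j, Real.exp (f (ω j)))
          * A.indicator 1 (ω i)) ∂μn)
        ≤ ∫ ω, (∑ i, ((fun ω' : Fin n → (Fin d → ℝ) => ω' i) ⁻¹' A).indicator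
          (1 : (Fin n → (Fin d → ℝ)) → ℝ) ω) ∂μn := by
      refine integral_mono_of_nonneg (Filter.Eventually.of_forall fun ω =>
        Finset.sum_nonneg fun i _ => mul_nonneg
          (div_nonneg (Real.exp_pos _).le (hsum ω).le) (hind01 A (ω i)).1) hgi
        (Filter.Eventually.of_forall fun ω => Finset.sum_le_sum fun i _ => ?_)
      have hieq : ((fun ω' : Fin n → (Fin d → ℝ) => ω' i) ⁻¹' A).indicator
          (1 : (Fin n → (Fin d → ℝ)) → ℝ) ω = A.indicator 1 (ω i) := by
        by_cases h : ω i ∈ A <;>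
          simp [Set.indicator_apply, Set.mem_preimage, h]
      rw [hieq]
      refine mul_le_of_le_one_left (hind01 A (ω i)).1 ?_
      rw [div_le_one (hsum ω)]
      exact Finset.single_le_sum (fun j _ => (Real.exp_pos (f (ω j))).le) (Finset.mem_univ i)
    refine hmono.trans ?_
    rw [integral_finset_sum]
    swap
    · exact fun i _ => (integrable_const (1:ℝ)).indicator (hpre i)
    have hμA : (volume.restrict (cube d)) A = ENNReal.ofReal t ^ d := by
      rw [Measure.restrict_apply hA, Set.inter_eq_self_of_subset_left hsub, hA_def]
      rw [show (Set.Icc (0 : Fin d → ℝ) fun _ => t) = Set.Icc 0 (fun _ => t) from rfl]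
      rw [Real.volume_Icc_pi]
      simp only [Pi.zero_apply, sub_zero, Finset.prod_const, Finset.card_univ,
        Fintype.card_fin]
    have heach : ∀ i : Fin n, (∫ ω, ((fun ω' : Fin n → (Fin d → ℝ) => ω' i) ⁻¹' A).indicator
        (1 : (Fin n → (Fin d → ℝ)) → ℝ) ω ∂μn) = t ^ d := by
      intro i
      rw [integral_indicator_one (hpre i), measureReal_def, hpi, eval_preimage_pi i A, hμA]
      rw [← ENNReal.ofReal_pow ht0.le, ENNReal.toReal_ofReal (pow_nonneg ht0.le d)]
    rw [Finset.sum_congr rfl fun i _ => heach i]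
    simp [Finset.sum_const, nsmul_eq_mul]
  have hPtA4 : Pt A ≤ 1/4 := by
    refine hPtA.trans (le_of_eq ?_)
    rw [htd]
    have hnne : (n:ℝ) ≠ 0 := hn'.ne'
    field_simp
  -- numeric bound on gibbs
  have hlog0 : 0 ≤ Real.log (4*d) := Real.log_nonneg (by linarith)
  have hmulrt : t = (4:ℝ)^(-(1:ℝ)/d) * (n:ℝ)^(-(1:ℝ)/d) := by
    rw [ht_def, Real.mul_rpow (by norm_num) hn'.le]
  have h4d : (1/4:ℝ) ≤ (4:ℝ)^(-(1:ℝ)/d) := by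
    rw [neg_div, Real.rpow_neg (by norm_num : (0:ℝ) ≤ 4)]
    have h1 : (4:ℝ)^((1:ℝ)/d) ≤ 4^(1:ℝ) :=
      Real.rpow_le_rpow_of_exponent_le (by norm_num) (by rw [div_le_one hd']; exact hd1)
    rw [Real.rpow_one] at h1
    have h2 : (0:ℝ) < 4^((1:ℝ)/d) := Real.rpow_pos_of_pos (by norm_num) _
    rw [one_div]
    exact inv_anti₀ h2 h1
  have hct : Real.log (4*d) ≤ c * t := by
    have hBt : (d:ℝ) * Real.log (4*d) ≤ B * t := by
      calc (d:ℝ) * Real.log (4*d) = (1/4) * (4 * d * Real.log (4*d)) := by ring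
        _ ≤ (1/4) * (B * (n:ℝ)^(-(1:ℝ)/d)) := by linarith [hcond]
        _ = B * ((1/4) * (n:ℝ)^(-(1:ℝ)/d)) := by ring
        _ ≤ B * ((4:ℝ)^(-(1:ℝ)/d) * (n:ℝ)^(-(1:ℝ)/d)) := by
            refine mul_le_mul_of_nonneg_left ?_ hB.le
            exact mul_le_mul_of_nonneg_right h4d (Real.rpow_pos_of_pos hn' _).le
        _ = B * t := by rw [hmulrt]
    calc Real.log (4*d) = (d * Real.log (4*d))/d := by field_simp
      _ ≤ B*t/d := by gcongr
      _ = c * t := by rw [hc_def]; ring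
  have hexp4d : Real.exp (-c * t) ≤ 1/(4*(d:ℝ)) := by
    have hR : Real.exp (-(Real.log (4*(d:ℝ)))) = 1/(4*(d:ℝ)) := by
      rw [Real.exp_neg, Real.exp_log (by linarith : (0:ℝ) < 4*(d:ℝ)), one_div]
    calc Real.exp (-c * t) = Real.exp (-(c*t)) := by ring_nf
      _ ≤ Real.exp (-(Real.log (4*(d:ℝ)))) := Real.exp_le_exp.mpr (neg_le_neg hct)
      _ = 1/(4*(d:ℝ)) := hR
  have hq : (1:ℝ)/(4*(d:ℝ)) ≤ 1/4 := by
    rw [div_le_div_iff₀ (by linarith) (by norm_num)]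
    nlinarith
  have hbase : 1 - 1/(4*(d:ℝ)) ≤ (1 - Real.exp (-c * t)) / (1 - Real.exp (-c*1)) := by
    have hden1 : 1 - Real.exp (-c*1) ≤ 1 := by linarith [Real.exp_pos (-c*1)]
    calc 1 - 1/(4*(d:ℝ)) ≤ 1 - Real.exp (-c*t) := by linarith
      _ ≤ (1 - Real.exp (-c*t)) / (1 - Real.exp (-c*1)) := by
          rw [le_div_iff₀ hden0]
          exact mul_le_of_le_one_right (by linarith) hden1
  have hpow : (3:ℝ)/4 ≤ (1 - 1/(4*(d:ℝ)))^d := by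
    have hber := one_add_mul_le_pow
      (neg_le_neg (hq.trans (by norm_num)) : (-2:ℝ) ≤ -(1/(4*(d:ℝ)))) d
    have hdd : (d:ℝ) * (1/(4*(d:ℝ))) = 1/4 := by field_simp
    calc (3:ℝ)/4 = 1 + d * -(1/(4*(d:ℝ))) := by
          rw [mul_neg, hdd]; norm_num
      _ ≤ (1 + -(1/(4*(d:ℝ))))^d := hber
      _ = (1 - 1/(4*(d:ℝ)))^d := by ring_nf
  have h34 : (3:ℝ)/4 ≤ (gibbs f A).toReal := by
    rw [hgibbsA]
    exact hpow.trans (pow_le_pow_left₀ (by linarith) hbase d)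
  -- boundedness of the family
  have hTop : gibbs f Set.univ ≠ ⊤ := by
    unfold gibbs
    rw [withDensity_apply _ MeasurableSet.univ, Measure.restrict_univ]
    have hcc : IsCompact (cube d) := isCompact_Icc
    have hint : IntegrableOn (fun x => Real.exp (f x) / partZ f) (cube d) volume :=
      (((Real.continuous_exp.comp hfc).div_const _).continuousOn).integrableOn_compact hcc
    rw [← ofReal_integral_eq_lintegral_ofReal hint
      (Filter.Eventually.of_forall fun x => div_nonneg (Real.exp_pos _).le hZ.le)]
    exact ENNReal.ofReal_ne_top
  have hbdd : BddAbove (Set.range fun A : {A : Set (Fin d → ℝ) // MeasurableSet A} =>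
      |(gibbs f A.1).toReal - Pt A.1|) := by
    refine ⟨(gibbs f Set.univ).toReal + 1, ?_⟩
    rintro x ⟨A', rfl⟩
    have h1 : (gibbs f A'.1).toReal ≤ (gibbs f Set.univ).toReal :=
      ENNReal.toReal_mono hTop (measure_mono (Set.subset_univ _))
    have h2 := hPt0 A'.1
    have h3 := hPtle1 A'.1
    have h4 : |(gibbs f A'.1).toReal - Pt A'.1| ≤ |(gibbs f A'.1).toReal| + |Pt A'.1| :=
      abs_sub _ _
    rw [abs_of_nonneg ENNReal.toReal_nonneg, abs_of_nonneg h2] at h4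
    linarith
  have hfinal : (1:ℝ)/2 ≤ |(gibbs f A).toReal - Pt A| := by
    have : (1:ℝ)/2 ≤ (gibbs f A).toReal - Pt A := by linarith
    exact this.trans (le_abs_self _)
  exact hfinal.trans (le_ciSup hbdd ⟨A, hA⟩)
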